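/- If f : E → ℝ is a convex function on a finite-dimensional Euclidean space E attaining its minimum f⋆ at x⋆, and f is sup-quadratic at x⋆ with characteristic τ > 0 (i.e., f(y) - f(x⋆) ≥ g·(y - x⋆) + (τ/2)‖y - x⋆‖² for all y and all g in the subdifferential ∂f(x⋆)), then the conjugate function f* satisfies f*(g) - f*(0) ≤ g·x⋆ + (1/(2τ))‖g‖² for all g, i.e., f* is sub-quadratic at 0 with characteristic at least τ⁻¹. -/
import Mathlib

open scoped RealInnerProductSpace
open Filter

variable {E : Type*} [NormedAddCommGroup E] [InnerProductSpace ℝ E] [FiniteDimensional ℝ E]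

/-- Fenchel conjugate `f*(g) = sup_x (g·x - f x)` (real-valued supremum). -/
noncomputable def conj (f : E → ℝ) (g : E) : ℝ := ⨆ x, (⟪g, x⟫ - f x)

/-- Subdifferential of a finite convex function. -/
def subdiff (f : E → ℝ) (x : E) : Set E := {g | ∀ y, f y - f x ≥ ⟪g, y - x⟫}

/-- Epigraph of the conjugate function: `{(μ, g) : μ ≥ f*(g)}` (including the
domain condition, correct even where `f* = +∞`). -/
def epiConj (f : E → ℝ) : Set (ℝ × E) := {p | ∀ x, ⟪p.2, x⟫ - f x ≤ p.1}

/-- Subdifferential of the conjugate `f*` at `g₀`: `x` with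
`f*(g) ≥ f*(g₀) + x·(g - g₀)` for all `g` (stated via upper bounds `μ ≥ f*(g)`). -/
def subdiffConj (f : E → ℝ) (g₀ : E) : Set E :=
  {x | ∀ p ∈ epiConj f, p.1 - conj f g₀ ≥ ⟪x, p.2 - g₀⟫}

/-- Directional derivative of the conjugate: `∂f*(g₀; d) = sup_{x ∈ ∂f*(g₀)} x·d`. -/
noncomputable def dirDConj (f : E → ℝ) (g₀ d : E) : ℝ :=
  sSup ((fun x => ⟪x, d⟫) '' subdiffConj f g₀)

/-- Directional derivative of a finite convex function `h`:
`∂h(g; d) = sup_{x ∈ ∂h(g)} x·d`. -/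
noncomputable def dirD (h : E → ℝ) (g d : E) : ℝ :=
  sSup ((fun x => ⟪x, d⟫) '' subdiff h g)

/-- sup-quadratic at a minimizer implies the conjugate is
sub-quadratic at 0 with characteristic at least τ⁻¹. -/
theorem conj_subquadratic_of_supquadratic
    (f : E → ℝ) (hf : ConvexOn ℝ Set.univ f) (xs : E) (hmin : ∀ y, f xs ≤ f y)
    (τ : ℝ) (hτ : 0 < τ)
    (hsq : ∀ g ∈ subdiff f xs, ∀ y,
      f y - f xs ≥ ⟪g, y - xs⟫ + τ / 2 * ‖y - xs‖ ^ 2) :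
    ∀ g : E, conj f g - conj f 0 ≤ ⟪g, xs⟫ + 1 / (2 * τ) * ‖g‖ ^ 2 := by
  intro g
  have h0 : (0 : E) ∈ subdiff f xs := by
    intro y
    simp [inner_zero_left]
    linarith [hmin y]
  have hq := hsq 0 h0
  simp only [inner_zero_left, zero_add] at hq
  -- each term bound
  have hbound : ∀ y, ⟪g, y⟫ - f y ≤ ⟪g, xs⟫ - f xs + 1 / (2 * τ) * ‖g‖ ^ 2 := by
    intro y
    have h1 := hq y
    have h2 : ⟪g, y - xs⟫ ≤ ‖g‖ * ‖y - xs‖ := real_inner_le_norm g (y - xs)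
    have h3 : ‖g‖ * ‖y - xs‖ - τ / 2 * ‖y - xs‖ ^ 2 ≤ 1 / (2 * τ) * ‖g‖ ^ 2 := by
      rw [one_div, inv_mul_eq_div, le_div_iff₀ (by linarith)]
      nlinarith [sq_nonneg (τ * ‖y - xs‖ - ‖g‖)]
    have h4 : ⟪g, y⟫ = ⟪g, xs⟫ + ⟪g, y - xs⟫ := by
      rw [← inner_add_right, add_sub_cancel]
    linarith
  have hconjg : conj f g ≤ ⟪g, xs⟫ - f xs + 1 / (2 * τ) * ‖g‖ ^ 2 :=
    ciSup_le hbound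
  have hconj0 : -f xs ≤ conj f 0 := by
    have hb : BddAbove (Set.range fun x => ⟪(0:E), x⟫ - f x) := by
      refine ⟨-f xs, ?_⟩
      rintro _ ⟨x, rfl⟩
      simp [inner_zero_left]
      exact hmin x
    have := le_ciSup hb xs
    simpa [inner_zero_left, conj] using this
  linarith
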